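/- (Bias bound on normalizing constants) The difference of partition functions satisfies 0 ≤ Z^f - Z^0 ≤ α · |{x : H(x) > c}| · (H_max - H_min) · f((H_max - c)_+), where Z^f = Σ_x e^{-H^f(x)} and Z^0 = Σ_x e^{-(H(x)-H_min)}. -/

import Mathlib

open MeasureTheory

/-- Bias bound on the normalizing constants:
`0 ≤ Z^f - Z^0 ≤ α |{x : H(x) > c}| (H_max - H_min) f((H_max - c)_+)`. -/
theorem partition_function_bias_bound {X : Type*} [Fintype X] [Nonempty X]
    (H : X → ℝ) (Hmin Hmax : ℝ)
    (hHmin : ∀ x, Hmin ≤ H x) (hmin_attain : ∃ x, H x = Hmin)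
    (hHmax : ∀ x, H x ≤ Hmax) (hmax_attain : ∃ x, H x = Hmax)
    (f : ℝ → ℝ) (hf_nonneg : ∀ u, 0 ≤ u → 0 ≤ f u)
    (hf_mono : ∀ u v, 0 ≤ u → u ≤ v → f u ≤ f v) (hf0 : f 0 = 0)
    (α : ℝ) (hα : 0 ≤ α) (c : ℝ) (hc : Hmin ≤ c)
    (Zf Z0 : ℝ)
    (hZf : Zf = ∑ x, Real.exp (-(∫ u in Hmin..(H x), 1 / (α * f (max (u - c) 0) + 1))))
    (hZ0 : Z0 = ∑ x, Real.exp (-(H x - Hmin))) :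
    0 ≤ Zf - Z0 ∧
    Zf - Z0 ≤ α * ((Finset.univ.filter (fun x : X => c < H x)).card : ℝ)
      * (Hmax - Hmin) * f (max (Hmax - c) 0) := by
  set M := max (Hmax - c) 0 with hM
  set φ : ℝ → ℝ := fun u => 1 / (α * f (max (u - c) 0) + 1) with hφ
  have hfM : 0 ≤ f M := hf_nonneg _ (le_max_right _ _)
  have hg1 : ∀ u, 1 ≤ α * f (max (u - c) 0) + 1 := by
    intro u
    have h := mul_nonneg hα (hf_nonneg (max (u - c) 0) (le_max_right _ _))
    linarith
  have hgpos : ∀ u, 0 < α * f (max (u - c) 0) + 1 := fun u => lt_of_lt_of_le one_pos (hg1 u)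
  have hg_mono : Monotone (fun u => α * f (max (u - c) 0) + 1) := by
    intro u v huv
    have h1 : f (max (u - c) 0) ≤ f (max (v - c) 0) :=
      hf_mono _ _ (le_max_right _ _) (max_le_max (by linarith) le_rfl)
    have := mul_le_mul_of_nonneg_left h1 hα
    dsimp only; linarith
  have hφ_anti : Antitone φ := by
    intro u v huv
    exact one_div_le_one_div_of_le (hgpos u) (hg_mono huv)
  have hφ_le_one : ∀ u, φ u ≤ 1 := by
    intro u
    rw [hφ]
    calc 1 / (α * f (max (u - c) 0) + 1) ≤ 1 / 1 := one_div_le_one_div_of_le one_pos (hg1 u)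
    _ = 1 := by norm_num
  have hφ_nonneg : ∀ u, 0 ≤ φ u := fun u => le_of_lt (one_div_pos.mpr (hgpos u))
  have hHmaxmin : Hmin ≤ Hmax := by
    obtain ⟨x, hx⟩ := hmax_attain; exact hx ▸ hHmin x
  -- per-point facts
  have key : ∀ x : X,
      (0 ≤ Real.exp (-(∫ u in Hmin..(H x), φ u)) - Real.exp (-(H x - Hmin))) ∧
      (Real.exp (-(∫ u in Hmin..(H x), φ u)) - Real.exp (-(H x - Hmin)) ≤
        if c < H x then α * (Hmax - Hmin) * f M else 0) := by
    intro x
    have ha : Hmin ≤ H x := hHmin x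
    have hint : IntervalIntegrable φ volume Hmin (H x) := hφ_anti.intervalIntegrable
    set I := ∫ u in Hmin..(H x), φ u with hIdef
    have hI_le : I ≤ H x - Hmin := by
      have h := intervalIntegral.integral_mono_on ha hint intervalIntegrable_const
        (fun u _ => hφ_le_one u)
      simpa using h
    have hI_nonneg : 0 ≤ I :=
      intervalIntegral.integral_nonneg ha (fun u _ => hφ_nonneg u)
    have hd_nonneg : 0 ≤ Real.exp (-I) - Real.exp (-(H x - Hmin)) := by
      have := Real.exp_le_exp.mpr (neg_le_neg hI_le)
      linarith
    refine ⟨hd_nonneg, ?_⟩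
    by_cases hcx : c < H x
    · simp only [hcx, if_true]
      -- bound (H x - Hmin) - I
      have hsub : (H x - Hmin) - I ≤ α * f M * (H x - Hmin) := by
        have hone : IntervalIntegrable (fun _ : ℝ => (1 : ℝ)) volume Hmin (H x) :=
          intervalIntegrable_const
        have h1 : (H x - Hmin) - I = ∫ u in Hmin..(H x), (1 - φ u) := by
          rw [intervalIntegral.integral_sub hone hint]
          simp
          exact hIdef
        rw [h1]
        have h2 : ∀ u ∈ Set.Icc Hmin (H x), (1 : ℝ) - φ u ≤ α * f M := by
          intro u hu
          have hfle : f (max (u - c) 0) ≤ f M := by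
            apply hf_mono _ _ (le_max_right _ _)
            apply max_le_max _ le_rfl
            have := hHmax x
            have := hu.2
            linarith
          set t := α * f (max (u - c) 0) with ht
          have ht0 : 0 ≤ t := mul_nonneg hα (hf_nonneg _ (le_max_right _ _))
          have htM : t ≤ α * f M := mul_le_mul_of_nonneg_left hfle hα
          have htpos : (0:ℝ) < t + 1 := by linarith
          have hmul : (t + 1) * (1 / (t + 1)) = 1 := mul_one_div_cancel (ne_of_gt htpos)
          have hφu : φ u = 1 / (t + 1) := rfl
          rw [hφu]
          nlinarith [hmul, htpos, ht0]
        have h3 := intervalIntegral.integral_mono_on ha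
          ((hone.sub hint)) intervalIntegrable_const h2
        calc (∫ u in Hmin..(H x), (1 - φ u)) ≤ ∫ _ in Hmin..(H x), α * f M := h3
          _ = α * f M * (H x - Hmin) := by simp [smul_eq_mul]; ring
      -- exp Lipschitz step
      set s := (H x - Hmin) - I with hs
      have hs0 : 0 ≤ s := by linarith
      have heq : Real.exp (-(H x - Hmin)) = Real.exp (-I) * Real.exp (-s) := by
        rw [← Real.exp_add, hs]; ring_nf
      have he1 : Real.exp (-I) ≤ 1 := Real.exp_le_one_iff.mpr (by linarith)
      have he2 : 1 - s ≤ Real.exp (-s) := by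
        have := Real.add_one_le_exp (-s); linarith
      have he3 : Real.exp (-s) ≤ 1 := Real.exp_le_one_iff.mpr (by linarith)
      have hepos : 0 < Real.exp (-I) := Real.exp_pos _
      have hdle : Real.exp (-I) - Real.exp (-(H x - Hmin)) ≤ s := by
        rw [heq]
        nlinarith
      have hsbound : s ≤ α * f M * (Hmax - Hmin) := by
        have : α * f M * (H x - Hmin) ≤ α * f M * (Hmax - Hmin) := by
          apply mul_le_mul_of_nonneg_left _ (mul_nonneg hα hfM)
          have := hHmax x; linarith
        linarith
      calc Real.exp (-I) - Real.exp (-(H x - Hmin)) ≤ s := hdle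
        _ ≤ α * f M * (Hmax - Hmin) := hsbound
        _ = α * (Hmax - Hmin) * f M := by ring
    · simp only [hcx, if_false]
      -- H x ≤ c, so I = H x - Hmin
      push_neg at hcx
      have hIeq : I = H x - Hmin := by
        have hcongr : ∀ u ∈ Set.uIcc Hmin (H x), φ u = 1 := by
          intro u hu
          rw [Set.uIcc_of_le ha] at hu
          have hu2 : u ≤ c := le_trans hu.2 hcx
          have : max (u - c) 0 = 0 := max_eq_right (by linarith)
          rw [hφ]; simp [this, hf0]
        rw [hIdef, intervalIntegral.integral_congr hcongr]
        simp
      rw [hIeq]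
      simp
  -- assemble
  have hsum : Zf - Z0 = ∑ x, (Real.exp (-(∫ u in Hmin..(H x), φ u)) - Real.exp (-(H x - Hmin))) := by
    rw [hZf, hZ0, ← Finset.sum_sub_distrib]
  constructor
  · rw [hsum]
    exact Finset.sum_nonneg fun x _ => (key x).1
  · rw [hsum]
    calc ∑ x, (Real.exp (-(∫ u in Hmin..(H x), φ u)) - Real.exp (-(H x - Hmin)))
        ≤ ∑ x : X, (if c < H x then α * (Hmax - Hmin) * f M else 0) :=
          Finset.sum_le_sum fun x _ => (key x).2
      _ = ((Finset.univ.filter (fun x : X => c < H x)).card : ℝ) * (α * (Hmax - Hmin) * f M) := by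
          rw [← Finset.sum_filter, Finset.sum_const, nsmul_eq_mul]
      _ = α * ((Finset.univ.filter (fun x : X => c < H x)).card : ℝ) * (Hmax - Hmin) * f M := by
          ring
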